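/- Let x^u − x^v be a nonzero binomial of J and b = deg_A(x^u) = deg_A(x^v). If the graph G_b(J) consists exactly of the two isolated vertices x^u and x^v (i.e., every monomial of M_J of A-degree b equals x^u or x^v, and they are not joined by an edge), then x^u − x^v is an indispensable binomial of J. -/

import Mathlib

open MvPolynomial

variable (K : Type*) [Field K]

/-- The `A`-degree of an exponent vector `u ∈ ℕ^n` with respect to a configuration
`a : Fin n → (Fin d → ℤ)`, namely `∑ i, u i • a i ∈ ℤ^d`. -/
noncomputable def degA {n d : ℕ} (a : Fin n → Fin d → ℤ) (u : Fin n →₀ ℕ) : Fin d → ℤ :=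
  ∑ i, (u i : ℤ) • a i

/-- The toric ideal of the configuration `A = {a_1, …, a_n} ⊂ ℤ^d`: the ideal generated by all
binomials `x^u - x^v` with `∑ u_i a_i = ∑ v_i a_i`. -/
noncomputable def toricIdeal {n d : ℕ} (a : Fin n → Fin d → ℤ) :
    Ideal (MvPolynomial (Fin n) K) :=
  Ideal.span { f | ∃ u v : Fin n →₀ ℕ, degA a u = degA a v ∧
    f = monomial u (1 : K) - monomial v (1 : K) }

/-- The monoid `ℕA` has no nonzero units: if `b ∈ ℕA` and `-b ∈ ℕA` then `b = 0`. -/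
def NoUnits {n d : ℕ} (a : Fin n → Fin d → ℤ) : Prop :=
  ∀ u v : Fin n →₀ ℕ, degA a u + degA a v = 0 → degA a u = 0

/-- `J` is an `A`-homogeneous pure difference binomial ideal: it is generated by binomials
`x^u - x^v` with `deg_A(x^u) = deg_A(x^v)`. -/
def IsAHomogPureDiff {n d : ℕ} (a : Fin n → Fin d → ℤ)
    (J : Ideal (MvPolynomial (Fin n) K)) : Prop :=
  ∃ S : Set (MvPolynomial (Fin n) K),
    (∀ f ∈ S, ∃ u v : Fin n →₀ ℕ, degA a u = degA a v ∧
      f = monomial u (1 : K) - monomial v (1 : K)) ∧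
    J = Ideal.span S

/-- `S` is a set of binomials generating `J`. -/
def IsBinomGenSet {σ : Type*} (J : Ideal (MvPolynomial σ K)) (S : Set (MvPolynomial σ K)) :
    Prop :=
  (∀ f ∈ S, ∃ u v : σ →₀ ℕ, f = monomial u (1 : K) - monomial v (1 : K)) ∧
  Ideal.span S = J

/-- The monomial `x^u` is an indispensable monomial of `J`: every set of binomials generating `J`
contains a binomial one of whose monomials is `x^u`. -/
def IndispMonomial {σ : Type*} (J : Ideal (MvPolynomial σ K)) (u : σ →₀ ℕ) : Prop :=
  ∀ S : Set (MvPolynomial σ K), IsBinomGenSet K J S → ∃ f ∈ S, u ∈ f.support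

/-- `f` is an indispensable binomial of `J`: every set of binomials generating `J` contains
`f` or `-f`. -/
def IndispBinomial {σ : Type*} (J : Ideal (MvPolynomial σ K)) (f : MvPolynomial σ K) : Prop :=
  ∀ S : Set (MvPolynomial σ K), IsBinomGenSet K J S → f ∈ S ∨ -f ∈ S

/-- `M_J`: the monomial ideal generated by all monomials `x^u` for which there exists a nonzero
binomial `x^u - x^v ∈ J`. -/
noncomputable def MIdeal {n : ℕ} (J : Ideal (MvPolynomial (Fin n) K)) :
    Ideal (MvPolynomial (Fin n) K) :=
  Ideal.span { m | ∃ u v : Fin n →₀ ℕ, u ≠ v ∧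
    (monomial u (1 : K) - monomial v (1 : K)) ∈ J ∧ m = monomial u (1 : K) }

/-- The edge relation of the graph `G_b(J)`: two (distinct) monomials `x^u`, `x^v` are joined by
an edge iff `gcd(x^u, x^v) ≠ 1` and there is a monomial `x^w ≠ 1` dividing `gcd(x^u, x^v)` with
`x^{u-w} - x^{v-w} ∈ J`. -/
def GEdge {n : ℕ} (J : Ideal (MvPolynomial (Fin n) K)) (u v : Fin n →₀ ℕ) : Prop :=
  u ≠ v ∧ ¬ Disjoint u.support v.support ∧
  ∃ w : Fin n →₀ ℕ, w ≠ 0 ∧ w ≤ u ∧ w ≤ v ∧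
    (monomial (u - w) (1 : K) - monomial (v - w) (1 : K)) ∈ J

/-! ### Auxiliary lemmas -/

/-- The character map sending `x_i` to the group-algebra element `t^{a_i}`. -/
noncomputable def charMap {n d : ℕ} (a : Fin n → Fin d → ℤ) :
    MvPolynomial (Fin n) K →ₐ[K] AddMonoidAlgebra K (Fin d → ℤ) :=
  aeval (fun i => AddMonoidAlgebra.single (a i) (1 : K))

lemma charMap_monomial {n d : ℕ} (a : Fin n → Fin d → ℤ) (u : Fin n →₀ ℕ) :
    charMap K a (monomial u (1 : K)) = AddMonoidAlgebra.single (degA a u) 1 := by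
  rw [charMap, aeval_monomial, map_one, one_mul]
  rw [Finsupp.prod_fintype _ _ (fun i => pow_zero _)]
  have : ∀ i : Fin n,
      AddMonoidAlgebra.single (a i) (1 : K) ^ u i
        = AddMonoidAlgebra.single ((u i : ℤ) • a i) 1 := by
    intro i
    rw [AddMonoidAlgebra.single_pow, one_pow, Nat.cast_smul_eq_nsmul]
  simp_rw [this]
  rw [AddMonoidAlgebra.prod_single]
  simp [degA]

lemma degA_eq_of_mem_J {n d : ℕ} (a : Fin n → Fin d → ℤ)
    {J : Ideal (MvPolynomial (Fin n) K)} (hJ : IsAHomogPureDiff K a J)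
    {p q : Fin n →₀ ℕ}
    (h : (monomial p (1 : K) - monomial q (1 : K) : MvPolynomial (Fin n) K) ∈ J) :
    degA a p = degA a q := by
  obtain ⟨S, hS, rfl⟩ := hJ
  have hker : Ideal.span S ≤ RingHom.ker (charMap K a).toRingHom := by
    rw [Ideal.span_le]
    intro f hf
    obtain ⟨u', v', hd, rfl⟩ := hS f hf
    simp [RingHom.mem_ker, map_sub, charMap_monomial, hd]
  have h0 := hker h
  simp only [RingHom.mem_ker, AlgHom.toRingHom_eq_coe, RingHom.coe_coe, map_sub,
    charMap_monomial, sub_eq_zero] at h0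
  exact (AddMonoidAlgebra.single_left_inj (one_ne_zero)).mp h0

lemma degA_add {n d : ℕ} (a : Fin n → Fin d → ℤ) (c q : Fin n →₀ ℕ) :
    degA a (c + q) = degA a c + degA a q := by
  unfold degA
  rw [← Finset.sum_add_distrib]
  congr 1; funext i
  rw [Finsupp.add_apply]
  push_cast
  rw [add_smul]

lemma support_mem_span {σ : Type*} {S : Set (MvPolynomial σ K)} {h : MvPolynomial σ K}
    (hh : h ∈ Ideal.span S) :
    ∀ m ∈ h.support, ∃ f ∈ S, ∃ c p, p ∈ f.support ∧ m = c + p := by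
  classical
  refine Submodule.span_induction (p := fun x _ => ∀ m ∈ x.support,
      ∃ f ∈ S, ∃ c p, p ∈ f.support ∧ m = c + p) ?_ ?_ ?_ ?_ hh
  · intro x hx m hm
    exact ⟨x, hx, 0, m, hm, (zero_add m).symm⟩
  · intro m hm
    simp at hm
  · intro x y _ _ hx hy m hm
    rcases Finset.mem_union.mp (MvPolynomial.support_add hm) with h1 | h1
    · exact hx m h1
    · exact hy m h1
  · intro r x _ hx m hm
    rw [smul_eq_mul] at hm
    obtain ⟨c', hc', p', hp', hsum⟩ := Finset.mem_add.mp (MvPolynomial.support_mul r x hm)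
    obtain ⟨f, hf, c, p, hp, he⟩ := hx p' hp'
    exact ⟨f, hf, c' + c, p, hp, by rw [← hsum, he, add_assoc]⟩

/-- Key step: if `x^p - x^q ∈ J` is `A`-homogeneous with `p ≠ q` and `u = c + p`, then under the
isolated-vertices hypothesis, `p = u` and `q = v`. -/
lemma key_step {n d : ℕ} (a : Fin n → Fin d → ℤ)
    (J : Ideal (MvPolynomial (Fin n) K))
    (u v : Fin n →₀ ℕ) (huv : u ≠ v)
    (hverts : ∀ w : Fin n →₀ ℕ,
      (monomial w (1 : K) : MvPolynomial (Fin n) K) ∈ MIdeal K J →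
      degA a w = degA a u → w = u ∨ w = v)
    (hnoedge : ¬ GEdge K J u v)
    (p q c : Fin n →₀ ℕ) (hpq : p ≠ q) (hd : degA a p = degA a q)
    (hfJ : (monomial p (1 : K) - monomial q (1 : K) : MvPolynomial (Fin n) K) ∈ J)
    (hu : u = c + p) : p = u ∧ q = v := by
  classical
  -- x^{c+p} - x^{c+q} ∈ J
  have hbin : (monomial (c + p) (1 : K) - monomial (c + q) (1 : K) :
      MvPolynomial (Fin n) K) ∈ J := by
    have := J.mul_mem_left (monomial c (1 : K)) hfJ
    rwa [mul_sub, monomial_mul, monomial_mul, one_mul] at this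
  have hbin' : (monomial (c + q) (1 : K) - monomial (c + p) (1 : K) :
      MvPolynomial (Fin n) K) ∈ J := by
    have := J.neg_mem hbin
    rwa [neg_sub] at this
  have hne : c + q ≠ c + p := fun h => hpq (add_left_cancel h).symm
  -- x^{c+q} is a monomial of M_J
  have hM : (monomial (c + q) (1 : K) : MvPolynomial (Fin n) K) ∈ MIdeal K J :=
    Ideal.subset_span ⟨c + q, c + p, hne, hbin', rfl⟩
  have hdegcq : degA a (c + q) = degA a u := by
    rw [hu, degA_add, degA_add, hd]
  rcases hverts (c + q) hM hdegcq with h1 | h1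
  · exact absurd (h1.trans hu) hne
  -- c + q = v ; now show c = 0
  by_cases hc : c = 0
  · subst hc
    constructor
    · rw [hu, zero_add]
    · rw [← h1, zero_add]
  · exfalso
    apply hnoedge
    refine ⟨huv, ?_, c, hc, ?_, ?_, ?_⟩
    · intro hdis
      obtain ⟨i, hi⟩ := Finsupp.support_nonempty_iff.mpr hc
      have hiu : i ∈ u.support := Finsupp.support_mono (hu ▸ self_le_add_right c p) hi
      have hiv : i ∈ v.support := Finsupp.support_mono (h1 ▸ self_le_add_right c q) hi
      exact (Finset.disjoint_left.mp hdis hiu) hiv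
    · rw [hu]; exact self_le_add_right c p
    · rw [← h1]; exact self_le_add_right c q
    · have hup : u - c = p := by rw [hu, add_tsub_cancel_left]
      have hvq : v - c = q := by rw [← h1, add_tsub_cancel_left]
      rw [hup, hvq]; exact hfJ

/-- Let `x^u - x^v` be a nonzero binomial of `J` of `A`-degree `b`. If the graph
`G_b(J)` consists exactly of the two isolated vertices `x^u` and `x^v` (every monomial of `M_J` of
`A`-degree `b` equals `x^u` or `x^v`, and they are not joined by an edge), then `x^u - x^v` is an
indispensable binomial of `J`. -/
theorem statement5 {n d : ℕ} (a : Fin n → Fin d → ℤ) (hA : NoUnits a)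
    (J : Ideal (MvPolynomial (Fin n) K)) (hJ : IsAHomogPureDiff K a J)
    (u v : Fin n →₀ ℕ) (huv : u ≠ v)
    (hmem : (monomial u (1 : K) - monomial v (1 : K) : MvPolynomial (Fin n) K) ∈ J)
    (hdeg : degA a u = degA a v)
    (hverts : ∀ w : Fin n →₀ ℕ,
      (monomial w (1 : K) : MvPolynomial (Fin n) K) ∈ MIdeal K J →
      degA a w = degA a u → w = u ∨ w = v)
    (hnoedge : ¬ GEdge K J u v) :
    IndispBinomial K J (monomial u (1 : K) - monomial v (1 : K)) := by
  classical
  intro S hS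
  obtain ⟨hbinom, hspan⟩ := hS
  -- u is in the support of x^u - x^v
  have husupp : u ∈ (monomial u (1 : K) - monomial v (1 : K)).support := by
    rw [MvPolynomial.mem_support_iff, MvPolynomial.coeff_sub, MvPolynomial.coeff_monomial,
      MvPolynomial.coeff_monomial, if_pos rfl, if_neg (Ne.symm huv)]
    simp
  have hmemS : (monomial u (1 : K) - monomial v (1 : K) : MvPolynomial (Fin n) K)
      ∈ Ideal.span S := by rw [hspan]; exact hmem
  obtain ⟨f, hfS, c, p₀, hp₀, hup₀⟩ := support_mem_span K hmemS u husupp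
  obtain ⟨p, q, rfl⟩ := hbinom f hfS
  have hfJ : (monomial p (1 : K) - monomial q (1 : K) : MvPolynomial (Fin n) K) ∈ J := by
    rw [← hspan]; exact Ideal.subset_span hfS
  have hpq : p ≠ q := by
    rintro rfl
    rw [sub_self] at hp₀
    simp at hp₀
  have hd : degA a p = degA a q := degA_eq_of_mem_J K a hJ hfJ
  -- p₀ = p or p₀ = q
  have hp₀' : p₀ = p ∨ p₀ = q := by
    by_contra hcon
    push_neg at hcon
    rw [MvPolynomial.mem_support_iff, MvPolynomial.coeff_sub, MvPolynomial.coeff_monomial,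
      MvPolynomial.coeff_monomial, if_neg (fun h => hcon.1 h.symm),
      if_neg (fun h => hcon.2 h.symm), sub_zero] at hp₀
    exact hp₀ rfl
  rcases hp₀' with rfl | rfl
  · obtain ⟨h1, h2⟩ := key_step K a J u v huv hverts hnoedge p₀ q c hpq hd hfJ hup₀
    left
    rw [← h1, ← h2]
    exact hfS
  · have hfJ' : (monomial p₀ (1 : K) - monomial p (1 : K) : MvPolynomial (Fin n) K) ∈ J := by
      have := J.neg_mem hfJ
      rwa [neg_sub] at this
    obtain ⟨h1, h2⟩ := key_step K a J u v huv hverts hnoedge p₀ p c (Ne.symm hpq) hd.symm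
      hfJ' hup₀
    right
    rw [neg_sub, ← h1, ← h2]
    exact hfS
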